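/- arXiv:2108.00050 — 3 statements merged into one kernel-verified Lean document; each statement's English description precedes it below -/
import Mathlib

section
/- In the lazy tournament of a trivalent tree T with n+3 labeled leaves, the sequence i_1, i_2, ..., i_n of losers (the smaller elements of the pairs that face off, in the order the rounds are played) is weakly decreasing: i_1 ≥ i_2 ≥ ··· ≥ i_n. -/
open SimpleGraph

/-- A candidate leaf-labeled graph on vertex set `Fin V` with `L` labeled leaves. -/
structure PreTree (L V : ℕ) where
  adj : Fin V → Fin V → Bool
  symm' : ∀ u v, adj u v = adj v u
  loopless' : ∀ v, adj v v = false
  leaf : Fin L → Fin V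

def PreTree.G {L V : ℕ} (T : PreTree L V) : SimpleGraph (Fin V) where
  Adj u v := T.adj u v = true
  symm := ⟨fun u v h => by show T.adj v u = true; rw [T.symm']; exact h⟩
  loopless := ⟨fun v h => by change T.adj v v = true at h; rw [T.loopless' v] at h; exact Bool.noConfusion h⟩

instance {L V : ℕ} (T : PreTree L V) : DecidableRel T.G.Adj :=
  fun u v => inferInstanceAs (Decidable (T.adj u v = true))

/-- `T` is a trivalent tree with leaves labeled bijectively by `Fin L`. -/
def PreTree.IsTrivalent {L V : ℕ} (T : PreTree L V) : Prop :=
  T.G.IsTree ∧ (∀ v, T.G.degree v = 1 ∨ T.G.degree v = 3) ∧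
    Function.Injective T.leaf ∧ (∀ i, T.G.degree (T.leaf i) = 1) ∧
    (∀ v, T.G.degree v = 1 → ∃ i, T.leaf i = v)

/-- Label-preserving isomorphism of leaf-labeled graphs. -/
def PreTree.Iso {L V : ℕ} (T T' : PreTree L V) : Prop :=
  ∃ σ : Fin V ≃ Fin V, (∀ u v, T'.adj (σ u) (σ v) = T.adj u v) ∧ ∀ i, σ (T.leaf i) = T'.leaf i

/-- Leaves `a = 0` and `b = 1` share a common (internal) vertex. -/
def PreTree.ABAdj {n V : ℕ} (T : PreTree (n+3) V) : Prop :=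
  ∃ v, T.G.Adj (T.leaf 0) v ∧ T.G.Adj (T.leaf 1) v

/-- Number of isomorphism classes of leaf-labeled graphs satisfying `P`. -/
noncomputable def classCount {L V : ℕ} (P : PreTree L V → Prop) : ℕ :=
  Nat.card (Quot fun (T T' : {T : PreTree L V // P T}) => PreTree.Iso T.1 T'.1)

/-- `w` separates `x` from `y` in `G`: every walk from `x` to `y` passes through `w`. -/
def Separates {V : Type*} (G : SimpleGraph V) (w x y : V) : Prop :=
  ∀ p : G.Walk x y, w ∈ p.support

/-- The laziness rule applies: the unlabeled edge `E` is adjacent to a labeled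
edge carrying a label `u ≠ j` with `u > i`. -/
def LazyApplies {n : ℕ} (T : PreTree (n+3) (2*n+4))
    (lab : Sym2 (Fin (2*n+4)) → Option (Fin (n+3)))
    (E : Sym2 (Fin (2*n+4))) (i j : Fin (n+3)) : Prop :=
  ∃ (e : Sym2 (Fin (2*n+4))) (u : Fin (n+3)) (v : Fin (2*n+4)),
    e ∈ T.G.edgeSet ∧ v ∈ e ∧ v ∈ E ∧ e ≠ E ∧ lab e = some u ∧ u ≠ j ∧ i < u

/-- A run of the lazy tournament on a tree with `n+3` leaves (labels ordered
`a = 0 < b = 1 < c = 2 < 1 = 3 < ⋯ < n = n+2` as elements of `Fin (n+3)`).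
`lab t` is the edge labeling before round `t`; round `t` has `loser t < winner t`
on adjacent labeled edges `loserE t`, `winnerE t` sharing vertex `vtx t` with the
unlabeled edge `newE t`, the pair having the maximal smaller label, and `newE t`
gets labeled according to the laziness rule. -/
structure Run (n : ℕ) (T : PreTree (n+3) (2*n+4)) where
  lab : ℕ → Sym2 (Fin (2*n+4)) → Option (Fin (n+3))
  loser : Fin n → Fin (n+3)
  winner : Fin n → Fin (n+3)
  loserE : Fin n → Sym2 (Fin (2*n+4))
  winnerE : Fin n → Sym2 (Fin (2*n+4))
  newE : Fin n → Sym2 (Fin (2*n+4))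
  vtx : Fin n → Fin (2*n+4)
  init_leaf : ∀ (i : Fin (n+3)) (w : Fin (2*n+4)), T.G.Adj (T.leaf i) w →
    lab 0 s(T.leaf i, w) = some i
  init_other : ∀ e : Sym2 (Fin (2*n+4)), (∀ i : Fin (n+3), T.leaf i ∉ e) → lab 0 e = none
  init_nonedge : ∀ e, e ∉ T.G.edgeSet → lab 0 e = none
  lt_lw : ∀ t, loser t < winner t
  loserE_mem : ∀ t, loserE t ∈ T.G.edgeSet
  winnerE_mem : ∀ t, winnerE t ∈ T.G.edgeSet
  newE_mem : ∀ t, newE t ∈ T.G.edgeSet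
  lab_loserE : ∀ t, lab t.1 (loserE t) = some (loser t)
  lab_winnerE : ∀ t, lab t.1 (winnerE t) = some (winner t)
  vtx_mem : ∀ t, vtx t ∈ loserE t ∧ vtx t ∈ winnerE t ∧ vtx t ∈ newE t
  edges_distinct : ∀ t, loserE t ≠ winnerE t ∧ loserE t ≠ newE t ∧ winnerE t ≠ newE t
  newE_unlabeled : ∀ t, lab t.1 (newE t) = none
  max_rule : ∀ (t : Fin n) (e1 e2 e3 : Sym2 (Fin (2*n+4))) (i j : Fin (n+3)) (v : Fin (2*n+4)),
    e1 ∈ T.G.edgeSet → e2 ∈ T.G.edgeSet → e3 ∈ T.G.edgeSet →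
    lab t.1 e1 = some i → lab t.1 e2 = some j → lab t.1 e3 = none → i < j →
    v ∈ e1 → v ∈ e2 → v ∈ e3 → e1 ≠ e2 → e1 ≠ e3 → e2 ≠ e3 →
    i ≤ loser t
  step_lazy : ∀ t : Fin n, LazyApplies T (lab t.1) (newE t) (loser t) (winner t) →
    lab (t.1+1) (newE t) = some (loser t)
  step_nonlazy : ∀ t : Fin n, ¬ LazyApplies T (lab t.1) (newE t) (loser t) (winner t) →
    lab (t.1+1) (newE t) = some (winner t)
  step_frame : ∀ (t : Fin n) (e : Sym2 (Fin (2*n+4))), e ≠ newE t → lab (t.1+1) e = lab t.1 e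

/-- Number of rounds won by label `i`. -/
def Run.wins {n : ℕ} {T : PreTree (n+3) (2*n+4)} (R : Run n T) (i : Fin (n+3)) : ℕ :=
  (Finset.univ.filter fun t : Fin n => R.winner t = i).card

/-- The element of `Fin (n+3)` corresponding to the numeric label `m+1 ∈ {1,…,n}`. -/
def lbl {n : ℕ} (m : Fin n) : Fin (n+3) := ⟨(m:ℕ)+3, by omega⟩

/-- `T ∈ Tour(k₁,…,kₙ)`. -/
def InTour {n : ℕ} (k : Fin n → ℕ) (T : PreTree (n+3) (2*n+4)) : Prop :=
  T.IsTrivalent ∧ T.ABAdj ∧ ∃ R : Run n T, ∀ m : Fin n, R.wins (lbl m) = k m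

/-- `|Tour(k₁,…,kₙ)|` (isomorphism classes). -/
noncomputable def TourCount {n : ℕ} (k : Fin n → ℕ) : ℕ := classCount (InTour k)

/-- `T'` is obtained from `T` by deleting the largest leaf and suppressing
the resulting degree-2 vertex `w`. -/
def DelLast (n : ℕ) (T : PreTree ((n+1)+3) (2*(n+1)+4)) (T' : PreTree (n+3) (2*n+4)) : Prop :=
  ∃ (g : Fin (2*n+4) → Fin (2*(n+1)+4)) (w : Fin (2*(n+1)+4)),
    Function.Injective g ∧
    T.G.Adj (T.leaf (Fin.last (n+3))) w ∧
    (∀ v, v ∈ Set.range g ↔ (v ≠ T.leaf (Fin.last (n+3)) ∧ v ≠ w)) ∧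
    (∀ u u' : Fin (2*n+4), T'.G.Adj u u' ↔
      (T.G.Adj (g u) (g u') ∨ (T.G.Adj (g u) w ∧ T.G.Adj (g u') w ∧ g u ≠ g u'))) ∧
    (∀ i : Fin (n+3), g (T'.leaf i) = T.leaf (Fin.castSucc i))

/-- `T'` is obtained from `T` by successively deleting the leaves `r+1, …, n`. -/
inductive Restricts : (n : ℕ) → (r : ℕ) → PreTree (n+3) (2*n+4) → PreTree (r+3) (2*r+4) → Prop
  | refl (n : ℕ) (T : PreTree (n+3) (2*n+4)) : Restricts n n T T
  | step (n r : ℕ) (T : PreTree ((n+1)+3) (2*(n+1)+4)) (T1 : PreTree (n+3) (2*n+4))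
      (T2 : PreTree (r+3) (2*r+4)) :
      DelLast n T T1 → Restricts n r T1 T2 → Restricts (n+1) r T T2

/-- The composition `k̃_j`: decrement `k j` and delete position `dpos`
(the rightmost zero of the result). -/
def tilde {n : ℕ} (k : Fin (n+1) → ℕ) (dpos : ℕ) (j : Fin (n+1)) : Fin n → ℕ :=
  fun m => if (m:ℕ) < dpos then Function.update k j (k j - 1) (Fin.castSucc m)
           else Function.update k j (k j - 1) (Fin.succ m)

/-- The map `π_lazy` relates `T` to the pair `(j, T')` where `j` is the winner of the
first round of the tournament, the two leaves that competed are deleted (the shared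
vertex becoming a new leaf) and the labels are shifted according to the (non)lazy case. -/
def PiLazyRel (n : ℕ) (k : Fin (n+1) → ℕ) (T : PreTree ((n+1)+3) (2*(n+1)+4))
    (j : Fin (n+1)) (T' : PreTree (n+3) (2*n+4)) : Prop :=
  ∃ (R : Run (n+1) T) (g : Fin (2*n+4) → Fin (2*(n+1)+4)),
    (∀ m : Fin (n+1), R.wins (lbl m) = k m) ∧
    R.winner ⟨0, Nat.succ_pos n⟩ = lbl j ∧
    Function.Injective g ∧
    (∀ v, v ∈ Set.range g ↔
      (v ≠ T.leaf (R.loser ⟨0, Nat.succ_pos n⟩) ∧ v ≠ T.leaf (R.winner ⟨0, Nat.succ_pos n⟩))) ∧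
    (∀ u u' : Fin (2*n+4), T'.G.Adj u u' ↔ T.G.Adj (g u) (g u')) ∧
    (if k j = 1 then
      ∀ β : Fin (n+3), g (T'.leaf β) =
        (if (β:ℕ) = ((R.loser ⟨0, Nat.succ_pos n⟩) : ℕ) then R.vtx ⟨0, Nat.succ_pos n⟩
         else if (β:ℕ) < ((R.winner ⟨0, Nat.succ_pos n⟩) : ℕ) then T.leaf (Fin.castSucc β)
         else T.leaf (Fin.succ β))
     else
      ∀ β : Fin (n+3), g (T'.leaf β) =
        (if (β:ℕ) < ((R.loser ⟨0, Nat.succ_pos n⟩) : ℕ) then T.leaf (Fin.castSucc β)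
         else if (β:ℕ)+1 = ((R.winner ⟨0, Nat.succ_pos n⟩) : ℕ) then R.vtx ⟨0, Nat.succ_pos n⟩
         else T.leaf (Fin.succ β)))

/-! ### Parking functions.
A parking function of size `n` is encoded by `col : Fin n → Fin n`, where `col x` is the
(0-indexed) column of the label `x+1`; the Dyck path condition (for paths from `(0,n)` to
`(n,0)` staying weakly above the diagonal, cells left of down steps) is `IsPF`. -/

def IsPF {n : ℕ} (col : Fin n → Fin n) : Prop :=
  ∀ j : Fin n, n - (j:ℕ) ≤ (Finset.univ.filter fun x => j ≤ col x).card

/-- Dominance index of label `x+1`: the number of columns strictly to its right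
containing no entry greater than `x+1` (empty columns count). -/
def domIdx {n : ℕ} (col : Fin n → Fin n) (x : Fin n) : ℕ :=
  (Finset.univ.filter fun j : Fin n => col x < j ∧ ∀ y, col y = j → y ≤ x).card

/-- Column-restricted: `x > d_x` for all labels `x` (label `x : Fin n` has value `x+1`). -/
def ColRes {n : ℕ} (col : Fin n → Fin n) : Prop := ∀ x : Fin n, domIdx col x < (x:ℕ) + 1

/-- Number of labels in column `j`. -/
def colCount {n : ℕ} (col : Fin n → Fin n) (j : Fin n) : ℕ :=
  (Finset.univ.filter fun x => col x = j).card

/-- `col'` is the image of `col` under the map `r`: remove the row containing the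
label `1`, decrement the remaining labels, and delete the rightmost empty column `E`. -/
def RSpec {n : ℕ} (col : Fin (n+1) → Fin (n+1)) (col' : Fin n → Fin n) : Prop :=
  ∃ E : Fin (n+1),
    (∀ y : Fin (n+1), y ≠ 0 → col y ≠ E) ∧
    (∀ j : Fin (n+1), (∀ y, y ≠ 0 → col y ≠ j) → j ≤ E) ∧
    (∀ x : Fin n, (col' x : ℕ) =
      if (col (Fin.succ x) : ℕ) < (E:ℕ) then (col (Fin.succ x) : ℕ)
      else (col (Fin.succ x) : ℕ) - 1)

/-- `col` is the parking function `τ(T)`: column `col m` contains label `m+1`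
iff the label `col m + 1` wins round `m+1` of the lazy tournament of `T`. -/
def TauRel {n : ℕ} (T : PreTree (n+3) (2*n+4)) (col : Fin n → Fin n) : Prop :=
  ∃ R : Run n T, ∀ t : Fin n, ((R.winner t) : ℕ) = (col t : ℕ) + 3

lemma losers_step {n : ℕ} {T : PreTree (n+3) (2*n+4)} (R : Run n T)
    (s s' : Fin n) (h : s'.1 = s.1 + 1) : R.loser s' ≤ R.loser s := by
  have hlabE1 : R.lab (s.1+1) (R.loserE s') = some (R.loser s') := h ▸ R.lab_loserE s'
  have hlabE2 : R.lab (s.1+1) (R.winnerE s') = some (R.winner s') := h ▸ R.lab_winnerE s'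
  have hlabE3 : R.lab (s.1+1) (R.newE s') = none := h ▸ R.newE_unlabeled s'
  obtain ⟨hv1, hv2, hv3⟩ := R.vtx_mem s'
  obtain ⟨hd12, hd13, hd23⟩ := R.edges_distinct s'
  have hlt := R.lt_lw s'
  have hlts := R.lt_lw s
  have hnsome : ∃ u, R.lab (s.1+1) (R.newE s) = some u := by
    by_cases hl : LazyApplies T (R.lab s.1) (R.newE s) (R.loser s) (R.winner s)
    · exact ⟨_, R.step_lazy s hl⟩
    · exact ⟨_, R.step_nonlazy s hl⟩
  have h3ne : R.newE s' ≠ R.newE s := by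
    intro heq; obtain ⟨u, hu⟩ := hnsome; rw [heq, hu] at hlabE3; cases hlabE3
  have h3t : R.lab s.1 (R.newE s') = none := by
    rw [← R.step_frame s _ h3ne]; exact hlabE3
  by_cases h1 : R.loserE s' = R.newE s
  · -- the loser edge of round s+1 is the edge labeled in round s
    have h2ne : R.winnerE s' ≠ R.newE s := fun he => hd12 (h1.trans he.symm)
    have h2t : R.lab s.1 (R.winnerE s') = some (R.winner s') := by
      rw [← R.step_frame s _ h2ne]; exact hlabE2
    by_cases hl : LazyApplies T (R.lab s.1) (R.newE s) (R.loser s) (R.winner s)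
    · have hlz := R.step_lazy s hl
      rw [h1, hlz] at hlabE1
      exact le_of_eq (Option.some_injective _ hlabE1).symm
    · exfalso
      have hnl := R.step_nonlazy s hl
      rw [h1, hnl] at hlabE1
      have hiw : R.loser s' = R.winner s := (Option.some_injective _ hlabE1).symm
      apply hl
      refine ⟨R.winnerE s', R.winner s', R.vtx s', R.winnerE_mem s', hv2, h1 ▸ hv1, h2ne, h2t,
        ?_, ?_⟩
      · intro he; rw [he] at hlt; rw [← hiw] at hlt; exact lt_irrefl _ hlt
      · calc R.loser s < R.winner s := hlts
          _ = R.loser s' := hiw.symm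
          _ < R.winner s' := hlt
  · have h1t : R.lab s.1 (R.loserE s') = some (R.loser s') := by
      rw [← R.step_frame s _ h1]; exact hlabE1
    by_cases h2 : R.winnerE s' = R.newE s
    · -- the winner edge of round s+1 is the edge labeled in round s
      by_cases hl : LazyApplies T (R.lab s.1) (R.newE s) (R.loser s) (R.winner s)
      · have hlz := R.step_lazy s hl
        rw [h2, hlz] at hlabE2
        have : R.winner s' = R.loser s := (Option.some_injective _ hlabE2).symm
        exact le_of_lt (this ▸ hlt)
      · have hnl := R.step_nonlazy s hl
        rw [h2, hnl] at hlabE2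
        have hjw : R.winner s' = R.winner s := (Option.some_injective _ hlabE2).symm
        by_contra hgt
        push_neg at hgt
        apply hl
        refine ⟨R.loserE s', R.loser s', R.vtx s', R.loserE_mem s', hv1, h2 ▸ hv2, h1, h1t,
          ?_, hgt⟩
        intro he; rw [he, ← hjw] at hlt; exact lt_irrefl _ hlt
    · -- neither edge touched: apply max_rule at time s
      have h2t : R.lab s.1 (R.winnerE s') = some (R.winner s') := by
        rw [← R.step_frame s _ h2]; exact hlabE2
      exact R.max_rule s (R.loserE s') (R.winnerE s') (R.newE s')
        (R.loser s') (R.winner s') (R.vtx s')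
        (R.loserE_mem s') (R.winnerE_mem s') (R.newE_mem s')
        h1t h2t h3t hlt hv1 hv2 hv3 hd12 hd13 hd23

/-- The sequence of losers of the lazy tournament is weakly decreasing. -/
theorem losers_decrease (n : ℕ) (T : PreTree (n+3) (2*n+4)) (hT : T.IsTrivalent)
    (R : Run n T) : ∀ t t' : Fin n, t ≤ t' → R.loser t' ≤ R.loser t := by
  intro t t' hle
  have hle' : t.1 ≤ t'.1 := hle
  obtain ⟨d, hd⟩ : ∃ d, t'.1 = t.1 + d := ⟨t'.1 - t.1, by omega⟩
  clear hle hle'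
  induction d generalizing t' with
  | zero =>
    have : t' = t := Fin.ext (by omega)
    rw [this]
  | succ d ih =>
    have hlt : t.1 + d < n := by have := t'.2; omega
    have hm : R.loser (⟨t.1 + d, hlt⟩ : Fin n) ≤ R.loser t := ih ⟨t.1 + d, hlt⟩ rfl
    exact le_trans (losers_step R ⟨t.1 + d, hlt⟩ t' (by omega)) hm
end

section
/- In the lazy tournament of a trivalent tree, if a label j wins the first round in which it competes, then j wins all subsequent rounds in which it competes (Winners Lemma). -/
open SimpleGraph

/-- Labels persist: once an edge carries a label, it keeps it (up to round `n`). -/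
lemma Run.persist {n : ℕ} {T : PreTree (n+3) (2*n+4)} (R : Run n T)
    (e : Sym2 (Fin (2*n+4))) (m : Fin (n+3)) :
    ∀ (s' s : ℕ), s ≤ s' → s' ≤ n → R.lab s e = some m → R.lab s' e = some m := by
  intro s'
  induction s' with
  | zero =>
    intro s hs _ h
    obtain rfl : s = 0 := Nat.le_zero.mp hs
    exact h
  | succ k ih =>
    intro s hs hn h
    rcases Nat.eq_or_lt_of_le hs with rfl | h1
    · exact h
    · have hk : R.lab k e = some m := ih s (by omega) (by omega) h
      have hkn : k < n := by omega
      by_cases he : e = R.newE ⟨k, hkn⟩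
      · exfalso
        have h0 : R.lab k (R.newE ⟨k, hkn⟩) = none := R.newE_unlabeled ⟨k, hkn⟩
        rw [← he] at h0
        rw [h0] at hk
        exact nomatch hk
      · have hf : R.lab (k+1) e = R.lab k e := R.step_frame ⟨k, hkn⟩ e he
        rw [hf, hk]

/-- The losers of the lazy tournament are antitone in the round index. -/
lemma Run.loser_antitone {n : ℕ} {T : PreTree (n+3) (2*n+4)} (R : Run n T) :
    ∀ (N : ℕ) (ρ σ : Fin n), ρ.1 = N → σ < ρ → R.loser ρ ≤ R.loser σ := by
  intro N
  induction N using Nat.strong_induction_on with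
  | _ N ih =>
  intro ρ σ hN hσρ
  classical
  obtain ⟨hv1, hv2, hv3⟩ := R.vtx_mem ρ
  obtain ⟨hd1, hd2, hd3⟩ := R.edges_distinct ρ
  have hlw : R.loser ρ < R.winner ρ := R.lt_lw ρ
  have hρn : ρ.1 < n := ρ.2
  -- the first time both edges of round ρ are labeled
  have hQex : ∃ s, (R.lab s (R.loserE ρ)).isSome = true ∧
      (R.lab s (R.winnerE ρ)).isSome = true :=
    ⟨ρ.1, by rw [R.lab_loserE ρ]; rfl, by rw [R.lab_winnerE ρ]; rfl⟩
  set s' := Nat.find hQex with hs'def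
  have hfind := Nat.find_spec hQex
  have hfle : s' ≤ ρ.1 := Nat.find_le ⟨by rw [R.lab_loserE ρ]; rfl, by rw [R.lab_winnerE ρ]; rfl⟩
  have hLval : ∀ s, s' ≤ s → s ≤ ρ.1 → R.lab s (R.loserE ρ) = some (R.loser ρ) := by
    intro s h1 h2
    obtain ⟨m, hm⟩ := Option.isSome_iff_exists.mp hfind.1
    have hmρ : R.lab ρ.1 (R.loserE ρ) = some m :=
      R.persist _ m ρ.1 s' hfle (le_of_lt hρn) hm
    rw [R.lab_loserE ρ] at hmρ
    obtain rfl : m = R.loser ρ := (Option.some_injective _ hmρ.symm)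
    exact R.persist _ _ s s' h1 (by omega) hm
  have hWval : ∀ s, s' ≤ s → s ≤ ρ.1 → R.lab s (R.winnerE ρ) = some (R.winner ρ) := by
    intro s h1 h2
    obtain ⟨m, hm⟩ := Option.isSome_iff_exists.mp hfind.2
    have hmρ : R.lab ρ.1 (R.winnerE ρ) = some m :=
      R.persist _ m ρ.1 s' hfle (le_of_lt hρn) hm
    rw [R.lab_winnerE ρ] at hmρ
    obtain rfl : m = R.winner ρ := (Option.some_injective _ hmρ.symm)
    exact R.persist _ _ s s' h1 (by omega) hm
  have hNnone : ∀ s, s ≤ ρ.1 → R.lab s (R.newE ρ) = none := by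
    intro s h2
    by_contra hne
    obtain ⟨m, hm⟩ := Option.ne_none_iff_exists'.mp hne
    have hmρ : R.lab ρ.1 (R.newE ρ) = some m :=
      R.persist _ m ρ.1 s h2 (le_of_lt hρn) hm
    rw [R.newE_unlabeled ρ] at hmρ
    exact nomatch hmρ
  -- middle rounds: the max rule bounds losers below by `loser ρ`
  have hmid : ∀ σ' : Fin n, s' ≤ σ'.1 → σ'.1 < ρ.1 → R.loser ρ ≤ R.loser σ' := by
    intro σ' h1 h2
    exact R.max_rule σ' (R.loserE ρ) (R.winnerE ρ) (R.newE ρ) (R.loser ρ) (R.winner ρ)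
      (R.vtx ρ) (R.loserE_mem ρ) (R.winnerE_mem ρ) (R.newE_mem ρ)
      (hLval σ'.1 h1 (le_of_lt h2)) (hWval σ'.1 h1 (le_of_lt h2))
      (hNnone σ'.1 (le_of_lt h2)) hlw hv1 hv2 hv3 hd1 hd2 hd3
  have hσρ' : σ.1 < ρ.1 := hσρ
  rcases le_or_gt s' σ.1 with hcase | hcase
  · exact hmid σ hcase hσρ'
  · -- σ is before the creation round s' - 1
    have hs1 : 1 ≤ s' := by omega
    have hτn : s' - 1 < n := by omega
    have hτρ : s' - 1 < ρ.1 := by omega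
    have hsucc : s' - 1 + 1 = s' := by omega
    have hnotQ : ¬ ((R.lab (s'-1) (R.loserE ρ)).isSome = true ∧
        (R.lab (s'-1) (R.winnerE ρ)).isSome = true) := Nat.find_min hQex (by omega)
    rw [not_and_or] at hnotQ
    -- key: the loser of round s'-1 is at least loser ρ
    have key : R.loser ρ ≤ R.loser ⟨s'-1, hτn⟩ := by
      rcases hnotQ with hA | hB
      · -- loserE ρ was unlabeled at time s'-1, so it is newE of round s'-1
        have haveL0 : R.lab (s'-1) (R.loserE ρ) = none := by
          cases h : R.lab (s'-1) (R.loserE ρ) with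
          | none => rfl
          | some m => exact absurd (by rw [h]; rfl) hA
        have hLs' : R.lab s' (R.loserE ρ) = some (R.loser ρ) := hLval s' le_rfl hfle
        have heLnew : R.loserE ρ = R.newE ⟨s'-1, hτn⟩ := by
          by_contra hne
          have hf : R.lab (s'-1+1) (R.loserE ρ) = R.lab (s'-1) (R.loserE ρ) :=
            R.step_frame ⟨s'-1, hτn⟩ _ hne
          rw [hsucc, hLs', haveL0] at hf
          exact nomatch hf
        have hWs0 : R.lab (s'-1) (R.winnerE ρ) = some (R.winner ρ) := by
          have hne : R.winnerE ρ ≠ R.newE ⟨s'-1, hτn⟩ := by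
            rw [← heLnew]; exact Ne.symm hd1
          have hf : R.lab (s'-1+1) (R.winnerE ρ) = R.lab (s'-1) (R.winnerE ρ) :=
            R.step_frame ⟨s'-1, hτn⟩ _ hne
          rw [hsucc] at hf
          rw [← hf]
          exact hWval s' le_rfl hfle
        by_cases hlz : LazyApplies T (R.lab (s'-1)) (R.newE ⟨s'-1, hτn⟩)
            (R.loser ⟨s'-1, hτn⟩) (R.winner ⟨s'-1, hτn⟩)
        · have h1 : R.lab (s'-1+1) (R.newE ⟨s'-1, hτn⟩) = some (R.loser ⟨s'-1, hτn⟩) :=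
            R.step_lazy _ hlz
          rw [hsucc, ← heLnew, hLs'] at h1
          exact le_of_eq (Option.some_injective _ h1)
        · exfalso
          have h1 : R.lab (s'-1+1) (R.newE ⟨s'-1, hτn⟩) = some (R.winner ⟨s'-1, hτn⟩) :=
            R.step_nonlazy _ hlz
          rw [hsucc, ← heLnew, hLs'] at h1
          have hwτ : R.winner ⟨s'-1, hτn⟩ = R.loser ρ := (Option.some_injective _ h1).symm
          apply hlz
          refine ⟨R.winnerE ρ, R.winner ρ, R.vtx ρ, R.winnerE_mem ρ, hv2,
            (by rw [← heLnew]; exact hv1), (by rw [← heLnew]; exact Ne.symm hd1),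
            hWs0, ?_, ?_⟩
          · rw [hwτ]; exact (ne_of_gt hlw)
          · calc R.loser ⟨s'-1, hτn⟩ < R.winner ⟨s'-1, hτn⟩ := R.lt_lw _
              _ = R.loser ρ := hwτ
              _ < R.winner ρ := hlw
      · -- winnerE ρ was unlabeled at time s'-1, so it is newE of round s'-1
        have haveW0 : R.lab (s'-1) (R.winnerE ρ) = none := by
          cases h : R.lab (s'-1) (R.winnerE ρ) with
          | none => rfl
          | some m => exact absurd (by rw [h]; rfl) hB
        have hWs' : R.lab s' (R.winnerE ρ) = some (R.winner ρ) := hWval s' le_rfl hfle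
        have heWnew : R.winnerE ρ = R.newE ⟨s'-1, hτn⟩ := by
          by_contra hne
          have hf : R.lab (s'-1+1) (R.winnerE ρ) = R.lab (s'-1) (R.winnerE ρ) :=
            R.step_frame ⟨s'-1, hτn⟩ _ hne
          rw [hsucc, hWs', haveW0] at hf
          exact nomatch hf
        have hLs0 : R.lab (s'-1) (R.loserE ρ) = some (R.loser ρ) := by
          have hne : R.loserE ρ ≠ R.newE ⟨s'-1, hτn⟩ := by
            rw [← heWnew]; exact hd1
          have hf : R.lab (s'-1+1) (R.loserE ρ) = R.lab (s'-1) (R.loserE ρ) :=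
            R.step_frame ⟨s'-1, hτn⟩ _ hne
          rw [hsucc] at hf
          rw [← hf]
          exact hLval s' le_rfl hfle
        by_cases hlz : LazyApplies T (R.lab (s'-1)) (R.newE ⟨s'-1, hτn⟩)
            (R.loser ⟨s'-1, hτn⟩) (R.winner ⟨s'-1, hτn⟩)
        · have h1 : R.lab (s'-1+1) (R.newE ⟨s'-1, hτn⟩) = some (R.loser ⟨s'-1, hτn⟩) :=
            R.step_lazy _ hlz
          rw [hsucc, ← heWnew, hWs'] at h1
          have : R.winner ρ = R.loser ⟨s'-1, hτn⟩ := Option.some_injective _ h1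
          rw [← this]
          exact le_of_lt hlw
        · have h1 : R.lab (s'-1+1) (R.newE ⟨s'-1, hτn⟩) = some (R.winner ⟨s'-1, hτn⟩) :=
            R.step_nonlazy _ hlz
          rw [hsucc, ← heWnew, hWs'] at h1
          have hwτ : R.winner ⟨s'-1, hτn⟩ = R.winner ρ := (Option.some_injective _ h1).symm
          by_contra hlt
          push_neg at hlt
          apply hlz
          refine ⟨R.loserE ρ, R.loser ρ, R.vtx ρ, R.loserE_mem ρ, hv1,
            (by rw [← heWnew]; exact hv2), (by rw [← heWnew]; exact hd1),
            hLs0, ?_, hlt⟩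
          rw [hwτ]; exact (ne_of_lt hlw)
    -- conclude for σ
    rcases Nat.eq_or_lt_of_le (show σ.1 ≤ s' - 1 by omega) with heq | hlt
    · have : σ = ⟨s'-1, hτn⟩ := Fin.ext heq
      rw [this]; exact key
    · have hih : R.loser ⟨s'-1, hτn⟩ ≤ R.loser σ :=
        ih (s'-1) (by omega) ⟨s'-1, hτn⟩ σ rfl hlt
      exact le_trans key hih

/-- **Winners Lemma.** If a label wins the first round in which it competes,
it wins all subsequent rounds in which it competes. -/
theorem winners_win (n : ℕ) (T : PreTree (n+3) (2*n+4)) (hT : T.IsTrivalent)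
    (R : Run n T) (j : Fin (n+3)) (t0 : Fin n)
    (hwin : R.winner t0 = j)
    (hfirst : ∀ t : Fin n, t < t0 → R.loser t ≠ j ∧ R.winner t ≠ j) :
    ∀ t : Fin n, (R.loser t = j ∨ R.winner t = j) → R.winner t = j := by
  intro t ht
  rcases ht with hl | hw
  · exfalso
    rcases lt_trichotomy t t0 with h | h | h
    · exact (hfirst t h).1 hl
    · subst h
      have := R.lt_lw t
      rw [hl, hwin] at this
      exact lt_irrefl _ this
    · have hmono : R.loser t ≤ R.loser t0 := R.loser_antitone t.1 t t0 rfl h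
      have hlt : R.loser t0 < j := by
        have := R.lt_lw t0
        rwa [hwin] at this
      rw [hl] at hmono
      exact absurd (lt_of_le_of_lt hmono hlt) (lt_irrefl _)
  · exact hw
end

section
/- If (k_1,...,k_n) is a weak composition of n with |Tour(k_1,...,k_n)| nonzero (equivalently Tour(k_1,...,k_n) nonempty), then (k_1,...,k_n) is a reverse Catalan sequence: for every 1 ≤ i ≤ n, k_n + k_{n-1} + ··· + k_{n-i+1} ≥ i. -/
open SimpleGraph

/-! ### Auxiliary development for Statement 13 -/

namespace Tour13

open Relation

variable {n : ℕ} {T : PreTree (n+3) (2*n+4)}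

/-- An edge is unlabeled at time `t`. -/
def Unl (R : Run n T) (t : ℕ) (e : Sym2 (Fin (2*n+4))) : Prop :=
  e ∈ T.G.edgeSet ∧ R.lab t e = none

/-- A vertex touching an unlabeled edge at time `t`. -/
def Wv (R : Run n T) (t : ℕ) (v : Fin (2*n+4)) : Prop :=
  ∃ e, Unl R t e ∧ v ∈ e

/-- A boundary (labeled, touching the unlabeled region) edge at time `t`. -/
def Bd (R : Run n T) (t : ℕ) (e : Sym2 (Fin (2*n+4))) : Prop :=
  e ∈ T.G.edgeSet ∧ (∃ u, R.lab t e = some u) ∧ ∃ v ∈ e, Wv R t v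

/-- A label alive (present on the boundary) at time `t`. -/
def AliveL (R : Run n T) (t : ℕ) (u : Fin (n+3)) : Prop :=
  ∃ e, Bd R t e ∧ R.lab t e = some u

/-- One step along an unlabeled edge. -/
def stepRel (R : Run n T) (t : ℕ) (a b : Fin (2*n+4)) : Prop :=
  T.G.Adj a b ∧ R.lab t s(a,b) = none

/-- The unlabeled region is connected at time `t`. -/
def ConnAt (R : Run n T) (t : ℕ) : Prop :=
  ∀ a b, Wv R t a → Wv R t b → Relation.ReflTransGen (stepRel R t) a b

open Classical in
/-- The label killed in round `t`. -/
noncomputable def killL (R : Run n T) (t : Fin n) : Fin (n+3) :=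
  if LazyApplies T (R.lab t.1) (R.newE t) (R.loser t) (R.winner t) then R.winner t
  else R.loser t

section Basics

variable (R : Run n T)

lemma mem_edge_decomp {e : Sym2 (Fin (2*n+4))} {v : Fin (2*n+4)}
    (he : e ∈ T.G.edgeSet) (hv : v ∈ e) : ∃ x, T.G.Adj v x ∧ e = s(v,x) := by
  induction e with
  | _ a b =>
    rw [SimpleGraph.mem_edgeSet] at he
    rcases Sym2.mem_iff.mp hv with rfl | rfl
    · exact ⟨b, he, rfl⟩
    · exact ⟨a, he.symm, Sym2.eq_swap⟩

lemma persist {t t' : ℕ} (h : t ≤ t') (h' : t' ≤ n) {e u} (hl : R.lab t e = some u) :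
    R.lab t' e = some u := by
  induction t' with
  | zero => obtain rfl := Nat.le_zero.mp h; exact hl
  | succ r ih =>
    rcases Nat.lt_or_ge t (r+1) with hlt | hge
    · have hr : r < n := by omega
      have ihr := ih (by omega) (by omega)
      by_cases hne : e = R.newE ⟨r, hr⟩
      · rw [hne] at ihr
        rw [R.newE_unlabeled ⟨r, hr⟩] at ihr
        exact ((nomatch ihr))
      · rw [R.step_frame ⟨r, hr⟩ e hne]; exact ihr
    · have : t = r + 1 := by omega
      subst this; exact hl

variable (hT : T.IsTrivalent)
include hT
set_option linter.unusedSectionVars false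

lemma leaf_nbr_unique {i : Fin (n+3)} {x y : Fin (2*n+4)}
    (hx : T.G.Adj (T.leaf i) x) (hy : T.G.Adj (T.leaf i) y) : x = y := by
  have h1 : T.G.degree (T.leaf i) = 1 := hT.2.2.2.1 i
  have hcard : (T.G.neighborFinset (T.leaf i)).card ≤ 1 := by
    rw [SimpleGraph.card_neighborFinset_eq_degree, h1]
  exact Finset.card_le_one.mp hcard x ((SimpleGraph.mem_neighborFinset _ _ _).mpr hx)
    y ((SimpleGraph.mem_neighborFinset _ _ _).mpr hy)

lemma lab0_of_leaf_mem (R : Run n T) {e : Sym2 (Fin (2*n+4))} {i : Fin (n+3)}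
    (he : e ∈ T.G.edgeSet) (hv : T.leaf i ∈ e) : R.lab 0 e = some i := by
  obtain ⟨x, hadj, rfl⟩ := mem_edge_decomp he hv
  exact R.init_leaf i x hadj

lemma lab0_some_cases (R : Run n T) {e : Sym2 (Fin (2*n+4))} {u : Fin (n+3)}
    (h : R.lab 0 e = some u) :
    e ∈ T.G.edgeSet ∧ ∃ x, T.G.Adj (T.leaf u) x ∧ e = s(T.leaf u, x) := by
  have he : e ∈ T.G.edgeSet := by
    by_contra hne
    rw [R.init_nonedge e hne] at h; exact (nomatch h)
  have hleaf : ∃ i, T.leaf i ∈ e := by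
    by_contra hne
    push_neg at hne
    rw [R.init_other e hne] at h; exact (nomatch h)
  obtain ⟨i, hi⟩ := hleaf
  have := lab0_of_leaf_mem hT R he hi
  rw [h] at this
  obtain rfl : u = i := by exact Option.some_injective _ this
  exact ⟨he, mem_edge_decomp he hi⟩

lemma deg3_of_not_leaf {v : Fin (2*n+4)} (h : ∀ i, T.leaf i ≠ v) : T.G.degree v = 3 := by
  rcases hT.2.1 v with h1 | h3
  · obtain ⟨i, hi⟩ := hT.2.2.2.2 v h1
    exact absurd hi (h i)
  · exact h3

lemma edges_eq_of_three {v : Fin (2*n+4)} {e1 e2 e3 : Sym2 (Fin (2*n+4))}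
    (he1 : e1 ∈ T.G.edgeSet) (he2 : e2 ∈ T.G.edgeSet) (he3 : e3 ∈ T.G.edgeSet)
    (hv1 : v ∈ e1) (hv2 : v ∈ e2) (hv3 : v ∈ e3)
    (h12 : e1 ≠ e2) (h13 : e1 ≠ e3) (h23 : e2 ≠ e3) :
    ∀ f ∈ T.G.edgeSet, v ∈ f → f = e1 ∨ f = e2 ∨ f = e3 := by
  obtain ⟨x1, ha1, rfl⟩ := mem_edge_decomp he1 hv1
  obtain ⟨x2, ha2, rfl⟩ := mem_edge_decomp he2 hv2
  obtain ⟨x3, ha3, rfl⟩ := mem_edge_decomp he3 hv3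
  have hx12 : x1 ≠ x2 := fun h => h12 (by rw [h])
  have hx13 : x1 ≠ x3 := fun h => h13 (by rw [h])
  have hx23 : x2 ≠ x3 := fun h => h23 (by rw [h])
  have hsub : ({x1, x2, x3} : Finset (Fin (2*n+4))) ⊆ T.G.neighborFinset v := by
    intro x hx
    simp only [Finset.mem_insert, Finset.mem_singleton] at hx
    rcases hx with rfl | rfl | rfl <;>
      exact (SimpleGraph.mem_neighborFinset _ _ _).mpr (by assumption)
  have hcard3 : ({x1, x2, x3} : Finset (Fin (2*n+4))).card = 3 := by
    rw [Finset.card_insert_of_notMem (by simp [hx12, hx13]),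
      Finset.card_insert_of_notMem (by simp [hx23]), Finset.card_singleton]
  have hdeg : T.G.degree v ≤ 3 := by
    rcases hT.2.1 v with h1 | h3 <;> omega
  have heq : T.G.neighborFinset v = {x1, x2, x3} :=
    (Finset.eq_of_subset_of_card_le hsub (by
      rw [SimpleGraph.card_neighborFinset_eq_degree, hcard3]; exact hdeg)).symm
  intro f hf hvf
  obtain ⟨x, hax, rfl⟩ := mem_edge_decomp hf hvf
  have : x ∈ T.G.neighborFinset v := (SimpleGraph.mem_neighborFinset _ _ _).mpr hax
  rw [heq] at this
  simp only [Finset.mem_insert, Finset.mem_singleton] at this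
  rcases this with rfl | rfl | rfl
  · exact Or.inl rfl
  · exact Or.inr (Or.inl rfl)
  · exact Or.inr (Or.inr rfl)

variable {R : Run n T}

lemma vtx_not_leaf (t : Fin n) (i : Fin (n+3)) : T.leaf i ≠ R.vtx t := by
  intro h
  have hne : R.newE t ∈ T.G.edgeSet := R.newE_mem t
  have hv : T.leaf i ∈ R.newE t := h ▸ (R.vtx_mem t).2.2
  have h0 : R.lab 0 (R.newE t) = some i := lab0_of_leaf_mem hT R hne hv
  have := persist R (Nat.zero_le _) (le_of_lt t.2) h0
  rw [R.newE_unlabeled t] at this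
  exact (nomatch this)

lemma edges_at_vtx (t : Fin n) :
    ∀ f ∈ T.G.edgeSet, R.vtx t ∈ f →
      f = R.loserE t ∨ f = R.winnerE t ∨ f = R.newE t :=
  edges_eq_of_three hT (R.loserE_mem t) (R.winnerE_mem t) (R.newE_mem t)
    (R.vtx_mem t).1 (R.vtx_mem t).2.1 (R.vtx_mem t).2.2
    (R.edges_distinct t).1 (R.edges_distinct t).2.1 (R.edges_distinct t).2.2

end Basics

section Connectivity

variable {R : Run n T} (hT : T.IsTrivalent)
include hT
set_option linter.unusedSectionVars false

lemma not_leaf_of_Wv {t : ℕ} (ht : t ≤ n) {v : Fin (2*n+4)} (h : Wv R t v)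
    (i : Fin (n+3)) : T.leaf i ≠ v := by
  rintro rfl
  obtain ⟨e, ⟨he, hnone⟩, hv⟩ := h
  have h0 : R.lab 0 e = some i := lab0_of_leaf_mem hT R he hv
  have := persist R (Nat.zero_le _) ht h0
  rw [hnone] at this; exact (nomatch this)

omit hT in
lemma lab_newE_succ (t : Fin n) :
    ∃ κ, R.lab (t.1+1) (R.newE t) = some κ ∧ (κ = R.loser t ∨ κ = R.winner t) := by
  by_cases hl : LazyApplies T (R.lab t.1) (R.newE t) (R.loser t) (R.winner t)
  · exact ⟨R.loser t, R.step_lazy t hl, Or.inl rfl⟩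
  · exact ⟨R.winner t, R.step_nonlazy t hl, Or.inr rfl⟩

omit hT in
lemma unl_succ (t : Fin n) {e : Sym2 (Fin (2*n+4))} :
    Unl R (t.1+1) e ↔ Unl R t.1 e ∧ e ≠ R.newE t := by
  constructor
  · rintro ⟨he, hnone⟩
    have hne : e ≠ R.newE t := by
      rintro rfl
      obtain ⟨κ, hκ, _⟩ := lab_newE_succ (R := R) t
      rw [hnone] at hκ; exact (nomatch hκ)
    exact ⟨⟨he, by rw [← R.step_frame t e hne]; exact hnone⟩, hne⟩
  · rintro ⟨⟨he, hnone⟩, hne⟩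
    exact ⟨he, by rw [R.step_frame t e hne]; exact hnone⟩

omit hT in
lemma Wv_succ {t : Fin n} {v : Fin (2*n+4)} (h : Wv R (t.1+1) v) : Wv R t.1 v := by
  obtain ⟨e, hu, hv⟩ := h
  exact ⟨e, ((unl_succ t).mp hu).1, hv⟩

lemma unl_at_vtx {t : Fin n} {e : Sym2 (Fin (2*n+4))} (hu : Unl R t.1 e)
    (hv : R.vtx t ∈ e) : e = R.newE t := by
  rcases edges_at_vtx hT t e hu.1 hv with rfl | rfl | rfl
  · have h2 := hu.2; rw [R.lab_loserE t] at h2; exact (nomatch h2)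
  · have h2 := hu.2; rw [R.lab_winnerE t] at h2; exact (nomatch h2)
  · rfl

lemma vtx_not_W_succ (t : Fin n) : ¬ Wv R (t.1+1) (R.vtx t) := by
  rintro ⟨e, hu, hv⟩
  have := (unl_succ t).mp hu
  exact this.2 (unl_at_vtx hT this.1 hv)

lemma walk_to_rtg {a b : Fin (2*n+4)} (p : T.G.Walk a b) (hp : p.IsPath)
    (ha : ∀ i, T.leaf i ≠ a) (hb : ∀ i, T.leaf i ≠ b) :
    Relation.ReflTransGen (stepRel R 0) a b := by
  induction p with
  | nil => exact Relation.ReflTransGen.refl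
  | @cons a c b h q ih =>
    have hc : ∀ i, T.leaf i ≠ c := by
      intro i hi
      cases q with
      | nil => exact hb i hi
      | @cons c d b h' q' =>
        have had : a = d := leaf_nbr_unique hT (i := i) (hi ▸ h.symm) (hi ▸ h')
        have hnotin := (SimpleGraph.Walk.cons_isPath_iff _ _).mp hp |>.2
        exact hnotin (by
          rw [SimpleGraph.Walk.support_cons, had]
          exact List.mem_cons_of_mem _ q'.start_mem_support)
    have hstep : stepRel R 0 a c := by
      refine ⟨h, R.init_other _ fun i hi => ?_⟩
      rcases Sym2.mem_iff.mp hi with hh | hh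
      · exact ha i hh
      · exact hc i hh
    exact Relation.ReflTransGen.head hstep
      (ih ((SimpleGraph.Walk.cons_isPath_iff _ _).mp hp).1 hc hb)

lemma conn0 : ConnAt R 0 := by
  intro a b hwa hwb
  have ha := not_leaf_of_Wv hT (t := 0) (Nat.zero_le n) hwa
  have hb := not_leaf_of_Wv hT (t := 0) (Nat.zero_le n) hwb
  obtain ⟨p⟩ : T.G.Reachable a b := hT.1.isConnected.preconnected a b
  exact walk_to_rtg hT p.toPath.1 p.toPath.2 ha hb

lemma conn_succ (t : Fin n) (hConn : ConnAt R t.1) : ConnAt R (t.1+1) := by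
  obtain ⟨y, hyadj, hyeq⟩ := mem_edge_decomp (R.newE_mem t) (R.vtx_mem t).2.2
  have hyne : y ≠ R.vtx t := hyadj.ne'
  have key : ∀ {c d : Fin (2*n+4)}, stepRel R t.1 c d → d = R.vtx t → c = y := by
    rintro c d ⟨hadj, hnone⟩ rfl
    have : s(c, R.vtx t) = R.newE t :=
      unl_at_vtx hT ⟨(T.G.mem_edgeSet).mpr hadj, hnone⟩ (Sym2.mem_mk_right _ _)
    rw [hyeq] at this
    rcases Sym2.eq_iff.mp this with ⟨hc, _⟩ | ⟨hc, _⟩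
    · exact absurd hc hadj.ne
    · exact hc
  have key2 : ∀ {c d : Fin (2*n+4)}, stepRel R t.1 c d → c = R.vtx t → d = y := by
    intro c d h hc
    exact key ⟨h.1.symm, by rw [Sym2.eq_swap]; exact h.2⟩ hc
  have step' : ∀ {c d : Fin (2*n+4)}, c ≠ R.vtx t → d ≠ R.vtx t → stepRel R t.1 c d →
      stepRel R (t.1+1) c d := by
    intro c d hc hd ⟨hadj, hnone⟩
    refine ⟨hadj, ?_⟩
    have hne : s(c,d) ≠ R.newE t := by
      intro h
      have : R.vtx t ∈ s(c,d) := h ▸ (R.vtx_mem t).2.2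
      rcases Sym2.mem_iff.mp this with hh | hh
      · exact hc hh.symm
      · exact hd hh.symm
    rw [R.step_frame t _ hne]; exact hnone
  intro a b hwa hwb
  have hane : a ≠ R.vtx t := fun h => vtx_not_W_succ hT t (h ▸ hwa)
  have hbne : b ≠ R.vtx t := fun h => vtx_not_W_succ hT t (h ▸ hwb)
  have main : ∀ {b : Fin (2*n+4)}, Relation.ReflTransGen (stepRel R t.1) a b →
      (b ≠ R.vtx t → Relation.ReflTransGen (stepRel R (t.1+1)) a b) ∧
      (b = R.vtx t → Relation.ReflTransGen (stepRel R (t.1+1)) a y) := by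
    intro b h
    induction h with
    | refl => exact ⟨fun _ => Relation.ReflTransGen.refl, fun h => absurd h hane⟩
    | @tail c d hac hcd ih =>
      constructor
      · intro hdne
        by_cases hc : c = R.vtx t
        · have hdy : d = y := key2 hcd hc
          rw [hdy]; exact ih.2 hc
        · exact (ih.1 hc).tail (step' hc hdne hcd)
      · intro hdeq
        have hcy : c = y := key hcd hdeq
        rw [← hcy]; exact ih.1 (hcy ▸ hyne)
  exact (main (hConn a b (Wv_succ hwa) (Wv_succ hwb))).1 hbne

lemma conn_all : ∀ m, m ≤ n → ConnAt R m := by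
  intro m
  induction m with
  | zero => exact fun _ => conn0 hT
  | succ r ih =>
    intro h
    exact conn_succ hT ⟨r, by omega⟩ (ih (by omega))

end Connectivity

section Boundary

variable {R : Run n T} (hT : T.IsTrivalent)
include hT
set_option linter.unusedSectionVars false

omit hT in
lemma rtg_walk {t : ℕ} {a b : Fin (2*n+4)}
    (h : Relation.ReflTransGen (stepRel R t) a b) :
    ∃ p : T.G.Walk a b, ∀ f ∈ p.edges, R.lab t f = none := by
  induction h with
  | refl => exact ⟨SimpleGraph.Walk.nil, by simp⟩
  | @tail c d hac hcd ih =>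
    obtain ⟨p, hp⟩ := ih
    refine ⟨p.concat hcd.1, ?_⟩
    intro f hf
    rw [SimpleGraph.Walk.edges_concat] at hf
    rw [List.concat_eq_append, List.mem_append] at hf
    rcases hf with hf | hf
    · exact hp f hf
    · rw [List.mem_singleton] at hf
      rw [hf]; exact hcd.2

lemma no_labeled_both {t : ℕ} (ht : t ≤ n) {x y : Fin (2*n+4)} {u : Fin (n+3)}
    (hadj : T.G.Adj x y) (hlab : R.lab t s(x,y) = some u)
    (hx : Wv R t x) (hy : Wv R t y) : False := by
  have hchain := conn_all hT t ht x y hx hy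
  obtain ⟨p, hp⟩ := rtg_walk hchain
  have huniq := isAcyclic_iff_path_unique.mp hT.1.IsAcyclic p.toPath
    (SimpleGraph.Path.singleton hadj)
  have hmem : s(x,y) ∈ (p.toPath : T.G.Walk x y).edges := by
    rw [huniq]
    simp [SimpleGraph.Path.singleton]
  have := hp _ (SimpleGraph.Walk.edges_toPath_subset p hmem)
  rw [hlab] at this; exact (nomatch this)

omit hT in
lemma loserE_bd (t : Fin n) : Bd R t.1 (R.loserE t) :=
  ⟨R.loserE_mem t, ⟨_, R.lab_loserE t⟩, R.vtx t, (R.vtx_mem t).1,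
    ⟨R.newE t, ⟨R.newE_mem t, R.newE_unlabeled t⟩, (R.vtx_mem t).2.2⟩⟩

omit hT in
lemma winnerE_bd (t : Fin n) : Bd R t.1 (R.winnerE t) :=
  ⟨R.winnerE_mem t, ⟨_, R.lab_winnerE t⟩, R.vtx t, (R.vtx_mem t).2.1,
    ⟨R.newE t, ⟨R.newE_mem t, R.newE_unlabeled t⟩, (R.vtx_mem t).2.2⟩⟩

lemma not_bd_succ_of_vtx (t : Fin n) {e : Sym2 (Fin (2*n+4))} {u : Fin (n+3)}
    (hlab : R.lab t.1 e = some u) (hvtx : R.vtx t ∈ e) : ¬ Bd R (t.1+1) e := by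
  rintro ⟨he, _, v, hv, hWv⟩
  obtain ⟨x, hadj, rfl⟩ := mem_edge_decomp he hvtx
  rcases Sym2.mem_iff.mp hv with rfl | rfl
  · exact vtx_not_W_succ hT t hWv
  · exact no_labeled_both hT (le_of_lt t.2) hadj hlab
      ⟨R.newE t, ⟨R.newE_mem t, R.newE_unlabeled t⟩, (R.vtx_mem t).2.2⟩ (Wv_succ hWv)

omit hT in
lemma bd_succ_cases (t : Fin n) {e : Sym2 (Fin (2*n+4))} (h : Bd R (t.1+1) e) :
    e = R.newE t ∨ (Bd R t.1 e ∧ R.lab (t.1+1) e = R.lab t.1 e) := by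
  by_cases hne : e = R.newE t
  · exact Or.inl hne
  · right
    obtain ⟨he, ⟨u, hu⟩, v, hv, hWv⟩ := h
    have hframe := R.step_frame t e hne
    exact ⟨⟨he, ⟨u, by rw [← hframe]; exact hu⟩, v, hv, Wv_succ hWv⟩, hframe⟩

lemma bdry_inj : ∀ m, m ≤ n → ∀ (e f : Sym2 (Fin (2*n+4))) (u : Fin (n+3)),
    Bd R m e → Bd R m f → R.lab m e = some u → R.lab m f = some u → e = f := by
  intro m
  induction m with
  | zero =>
    intro _ e f u _ _ he hf
    obtain ⟨_, x, hax, rfl⟩ := lab0_some_cases hT R he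
    obtain ⟨_, x', hax', rfl⟩ := lab0_some_cases hT R hf
    rw [leaf_nbr_unique hT hax hax']
  | succ r ih =>
    intro hr e f u hbe hbf hle hlf
    have hrn : r < n := by omega
    set t : Fin n := ⟨r, hrn⟩ with htdef
    have ihr := ih (by omega)
    have hnew : ∀ {g : Sym2 (Fin (2*n+4))}, Bd R (r+1) g →
        R.lab (r+1) g = some u → R.lab (r+1) (R.newE t) = some u → g = R.newE t := by
      intro g hbg hlg hlnew
      by_contra hne
      rcases bd_succ_cases t hbg with h | ⟨hbd, hfr⟩
      · exact hne h
      obtain ⟨κ, hκ, hκcase⟩ := lab_newE_succ (R := R) t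
      rw [hκ] at hlnew
      obtain rfl : κ = u := Option.some_injective _ hlnew
      have hlg' : R.lab r g = some κ := by rw [← hfr]; exact hlg
      rcases hκcase with hκl | hκw
      · have : g = R.loserE t := ihr _ _ _ hbd (loserE_bd t) hlg' (hκl ▸ R.lab_loserE t)
        rw [this] at hbg
        exact not_bd_succ_of_vtx hT t (R.lab_loserE t) (R.vtx_mem t).1 hbg
      · have : g = R.winnerE t := ihr _ _ _ hbd (winnerE_bd t) hlg' (hκw ▸ R.lab_winnerE t)
        rw [this] at hbg
        exact not_bd_succ_of_vtx hT t (R.lab_winnerE t) (R.vtx_mem t).2.1 hbg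
    rcases bd_succ_cases t hbe with he | ⟨hbde, hfe⟩
    · rcases bd_succ_cases t hbf with hf | ⟨hbdf, hff⟩
      · rw [he, hf]
      · exact ((hnew hbf hlf (he ▸ hle)).trans he.symm).symm
    · rcases bd_succ_cases t hbf with hf | ⟨hbdf, hff⟩
      · exact (hnew hbe hle (hf ▸ hlf)).trans hf.symm
      · exact ihr _ _ _ hbde hbdf (by rw [← hfe]; exact hle) (by rw [← hff]; exact hlf)

omit hT in
lemma alive_succ (t : Fin n) {u : Fin (n+3)} (h : AliveL R (t.1+1) u) :
    AliveL R t.1 u := by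
  obtain ⟨e, hbd, hlab⟩ := h
  rcases bd_succ_cases t hbd with he | ⟨hbd', hfr⟩
  · obtain ⟨κ, hκ, hκcase⟩ := lab_newE_succ (R := R) t
    rw [he, hκ] at hlab
    obtain rfl : κ = u := Option.some_injective _ hlab
    rcases hκcase with rfl | rfl
    · exact ⟨R.loserE t, loserE_bd t, R.lab_loserE t⟩
    · exact ⟨R.winnerE t, winnerE_bd t, R.lab_winnerE t⟩
  · exact ⟨e, hbd', by rw [← hfr]; exact hlab⟩

omit hT in
lemma alive_mono {m m' : ℕ} (h : m ≤ m') (h' : m' ≤ n) {u : Fin (n+3)}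
    (ha : AliveL R m' u) : AliveL R m u := by
  induction m' with
  | zero => obtain rfl := Nat.le_zero.mp h; exact ha
  | succ r ih =>
    rcases Nat.lt_or_ge m (r+1) with hlt | hge
    · exact ih (by omega) (by omega) (alive_succ ⟨r, by omega⟩ ha)
    · have : m = r + 1 := by omega
      subst this; exact ha

lemma kill_dead (t : Fin n) : ¬ AliveL R (t.1+1) (killL R t) := by
  rintro ⟨e, hbd, hlab⟩
  by_cases hl : LazyApplies T (R.lab t.1) (R.newE t) (R.loser t) (R.winner t)
  · rw [killL, if_pos hl] at hlab
    rcases bd_succ_cases t hbd with he | ⟨hbd', hfr⟩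
    · rw [he, R.step_lazy t hl] at hlab
      exact absurd (Option.some_injective _ hlab) (R.lt_lw t).ne
    · have : e = R.winnerE t := bdry_inj hT t.1 (le_of_lt t.2) _ _ _ hbd' (winnerE_bd t)
        (by rw [← hfr]; exact hlab) (R.lab_winnerE t)
      rw [this] at hbd
      exact not_bd_succ_of_vtx hT t (R.lab_winnerE t) (R.vtx_mem t).2.1 hbd
  · rw [killL, if_neg hl] at hlab
    rcases bd_succ_cases t hbd with he | ⟨hbd', hfr⟩
    · rw [he, R.step_nonlazy t hl] at hlab
      exact absurd (Option.some_injective _ hlab).symm (R.lt_lw t).ne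
    · have : e = R.loserE t := bdry_inj hT t.1 (le_of_lt t.2) _ _ _ hbd' (loserE_bd t)
        (by rw [← hfr]; exact hlab) (R.lab_loserE t)
      rw [this] at hbd
      exact not_bd_succ_of_vtx hT t (R.lab_loserE t) (R.vtx_mem t).1 hbd

omit hT in
lemma loser_alive (t : Fin n) : AliveL R t.1 (R.loser t) :=
  ⟨R.loserE t, loserE_bd t, R.lab_loserE t⟩

omit hT in
lemma winner_alive (t : Fin n) : AliveL R t.1 (R.winner t) :=
  ⟨R.winnerE t, winnerE_bd t, R.lab_winnerE t⟩

lemma kill_not_later {t t' : Fin n} (h : t.1 < t'.1) :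
    killL R t ≠ R.loser t' ∧ killL R t ≠ R.winner t' := by
  constructor
  · intro heq
    exact kill_dead hT t (alive_mono (by omega) (le_of_lt t'.2) (heq ▸ loser_alive t'))
  · intro heq
    exact kill_dead hT t (alive_mono (by omega) (le_of_lt t'.2) (heq ▸ winner_alive t'))

omit hT in
lemma kill_mem (t : Fin n) : killL R t = R.loser t ∨ killL R t = R.winner t := by
  rw [killL]
  split_ifs
  · exact Or.inr rfl
  · exact Or.inl rfl

lemma kill_injective : Function.Injective (killL R) := by
  intro t t' heq
  by_contra hne
  have hvne : t.1 ≠ t'.1 := fun h => hne (Fin.ext h)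
  rcases Nat.lt_or_ge t.1 t'.1 with hlt | hge
  · rcases kill_mem (R := R) t' with h | h
    · exact (kill_not_later hT hlt).1 (heq.trans h)
    · exact (kill_not_later hT hlt).2 (heq.trans h)
  · have hlt : t'.1 < t.1 := by omega
    rcases kill_mem (R := R) t with h | h
    · exact (kill_not_later hT hlt).1 (heq.symm.trans h)
    · exact (kill_not_later hT hlt).2 (heq.symm.trans h)

end Boundary

section Participants

variable {R : Run n T}

lemma lbl_injective : Function.Injective (lbl (n := n)) := by
  intro a b h
  have : (a : ℕ) + 3 = (b : ℕ) + 3 := congrArg Fin.val h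
  exact Fin.ext (by omega)

lemma winner_lbl {k : Fin n → ℕ} (hk : ∑ m, k m = n)
    (hwins : ∀ m : Fin n, R.wins (lbl m) = k m) (t : Fin n) :
    ∃ m : Fin n, R.winner t = lbl m := by
  classical
  have hsum : ∑ m : Fin n,
      (Finset.univ.filter fun t : Fin n => R.winner t = lbl m).card = n := by
    calc ∑ m : Fin n, (Finset.univ.filter fun t : Fin n => R.winner t = lbl m).card
        = ∑ m : Fin n, k m := by
          refine Finset.sum_congr rfl fun m _ => ?_
          rw [← hwins m]; rfl
      _ = n := hk
  set B := Finset.univ.biUnion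
    (fun m : Fin n => Finset.univ.filter fun t : Fin n => R.winner t = lbl m) with hB
  have hdisj : ∀ m ∈ Finset.univ, ∀ m' ∈ Finset.univ, m ≠ m' →
      Disjoint (Finset.univ.filter fun t : Fin n => R.winner t = lbl m)
        (Finset.univ.filter fun t : Fin n => R.winner t = lbl m') := by
    intro m _ m' _ hne
    rw [Finset.disjoint_filter]
    intro t _ h1 h2
    exact hne (lbl_injective (h1.symm.trans h2))
  have hcard : B.card = n := by rw [Finset.card_biUnion hdisj]; exact hsum
  have hBuniv : B = Finset.univ :=
    Finset.eq_univ_of_card B (by rw [hcard, Fintype.card_fin])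
  have ht : t ∈ B := hBuniv ▸ Finset.mem_univ t
  rw [hB, Finset.mem_biUnion] at ht
  obtain ⟨m, _, hm⟩ := ht
  exact ⟨m, (Finset.mem_filter.mp hm).2⟩

lemma winner_ge3 (hwl : ∀ t : Fin n, ∃ m : Fin n, R.winner t = lbl m) (t : Fin n) :
    3 ≤ (R.winner t : ℕ) := by
  obtain ⟨m, hm⟩ := hwl t
  rw [hm]
  show 3 ≤ (m : ℕ) + 3
  omega

lemma sym2_cancel {x y z : Fin (2*n+4)} (h : s(x, z) = s(y, z)) (hx : x ≠ z) : x = y := by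
  rcases Sym2.eq_iff.mp h with ⟨h1, _⟩ | ⟨h1, h2⟩
  · exact h1
  · exact absurd h1 hx

lemma loser_ge2 (hT : T.IsTrivalent) (hAB : T.ABAdj)
    (hwl : ∀ t : Fin n, ∃ m : Fin n, R.winner t = lbl m) :
    ∀ t : Fin n, 2 ≤ (R.loser t : ℕ) := by
  obtain ⟨w, hw0, hw1⟩ := hAB
  have hval0 : ((0 : Fin (n+3)) : ℕ) = 0 := rfl
  have hval1 : ((1 : Fin (n+3)) : ℕ) = 1 := rfl
  have hwin3 := winner_ge3 hwl
  have lab_a : ∀ m, m ≤ n → R.lab m s(T.leaf 0, w) = some 0 :=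
    fun m hm => persist R (Nat.zero_le _) hm (R.init_leaf 0 w hw0)
  have lab_b : ∀ m, m ≤ n → R.lab m s(T.leaf 1, w) = some 1 :=
    fun m hm => persist R (Nat.zero_le _) hm (R.init_leaf 1 w hw1)
  have uniq01 : ∀ m, m ≤ n → (∀ t : Fin n, t.1 < m → 2 ≤ (R.loser t : ℕ)) →
      ∀ e, (R.lab m e = some 0 → e = s(T.leaf 0, w)) ∧
        (R.lab m e = some 1 → e = s(T.leaf 1, w)) := by
    intro m
    induction m with
    | zero =>
      intro _ _ e
      constructor
      · intro h
        obtain ⟨_, x, hax, rfl⟩ := lab0_some_cases hT R h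
        rw [leaf_nbr_unique hT hax hw0]
      · intro h
        obtain ⟨_, x, hax, rfl⟩ := lab0_some_cases hT R h
        rw [leaf_nbr_unique hT hax hw1]
    | succ r ih =>
      intro hr hlos e
      have hrn : r < n := by omega
      set t : Fin n := ⟨r, hrn⟩ with htdef
      have hnew : ∀ u : Fin (n+3), (u : ℕ) < 2 → R.lab (r+1) e = some u →
          e ≠ R.newE t := by
        intro u hu hl heq
        subst heq
        obtain ⟨κ, hκ, hκcase⟩ := lab_newE_succ (R := R) t
        have hκ' : R.lab (r+1) (R.newE t) = some κ := hκ
        rw [hκ'] at hl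
        obtain rfl : κ = u := Option.some_injective _ hl
        rcases hκcase with rfl | rfl
        · have := hlos t (Nat.lt_succ_self r)
          omega
        · have := hwin3 t
          omega
      constructor
      · intro h
        have hne := hnew 0 (by omega) h
        have hframe : R.lab (r+1) e = R.lab r e := R.step_frame t e hne
        rw [hframe] at h
        exact (ih (by omega) (fun t' ht' => hlos t' (by omega)) e).1 h
      · intro h
        have hne := hnew 1 (by omega) h
        have hframe : R.lab (r+1) e = R.lab r e := R.step_frame t e hne
        rw [hframe] at h
        exact (ih (by omega) (fun t' ht' => hlos t' (by omega)) e).2 h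
  suffices hmain : ∀ N, ∀ t : Fin n, t.1 < N → 2 ≤ (R.loser t : ℕ) by
    intro t; exact hmain n t t.2
  intro N
  induction N with
  | zero => intro t ht; omega
  | succ N ih =>
    intro t ht
    rcases Nat.lt_or_ge t.1 N with hlt | hge
    · exact ih t hlt
    have htN : t.1 = N := by omega
    by_contra hlt2
    push_neg at hlt2
    have hU := uniq01 t.1 (le_of_lt t.2) (fun t' ht' => ih t' (by omega))
    -- the loser's edge is the a-edge or the b-edge, and vtx t = w
    have hvw : (R.loserE t = s(T.leaf 0, w) ∨ R.loserE t = s(T.leaf 1, w)) := by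
      interval_cases hl : ((R.loser t : ℕ)) 
      · exact Or.inl ((hU _).1 (by
          have := R.lab_loserE t
          rwa [show R.loser t = (0 : Fin (n+3)) from Fin.ext (by omega)] at this))
      · exact Or.inr ((hU _).2 (by
          have := R.lab_loserE t
          rwa [show R.loser t = (1 : Fin (n+3)) from Fin.ext (by omega)] at this))
    have hvtxw : R.vtx t = w := by
      have hv := (R.vtx_mem t).1
      rcases hvw with he | he <;> rw [he] at hv <;>
        rcases Sym2.mem_iff.mp hv with hh | hh
      · exact absurd hh.symm (vtx_not_leaf hT t 0)
      · exact hh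
      · exact absurd hh.symm (vtx_not_leaf hT t 1)
      · exact hh
    -- the "other" a/b edge is one of the three edges at vtx t = w; all impossible
    rcases hvw with he | he
    · -- loserE = aEdge; consider bEdge
      have hbmem : s(T.leaf 1, w) ∈ T.G.edgeSet := (T.G.mem_edgeSet).mpr hw1
      have hbv : R.vtx t ∈ s(T.leaf 1, w) := by rw [hvtxw]; exact Sym2.mem_mk_right _ _
      rcases edges_at_vtx hT t _ hbmem hbv with hh | hh | hh
      · rw [he] at hh
        have : T.leaf 1 = T.leaf 0 := sym2_cancel hh hw1.ne
        have h01 : (1 : Fin (n+3)) = 0 := hT.2.2.1 this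
        have := congrArg Fin.val h01
        rw [hval0, hval1] at this; omega
      · have h1 := R.lab_winnerE t
        rw [← hh, lab_b t.1 (le_of_lt t.2)] at h1
        have : (1 : Fin (n+3)) = R.winner t := Option.some_injective _ h1
        have h3 := hwin3 t
        rw [← this, hval1] at h3; omega
      · have h1 := R.newE_unlabeled t
        rw [← hh, lab_b t.1 (le_of_lt t.2)] at h1
        exact (nomatch h1)
    · -- loserE = bEdge; consider aEdge
      have hamem : s(T.leaf 0, w) ∈ T.G.edgeSet := (T.G.mem_edgeSet).mpr hw0
      have hav : R.vtx t ∈ s(T.leaf 0, w) := by rw [hvtxw]; exact Sym2.mem_mk_right _ _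
      rcases edges_at_vtx hT t _ hamem hav with hh | hh | hh
      · rw [he] at hh
        have : T.leaf 0 = T.leaf 1 := sym2_cancel hh hw0.ne
        have h01 : (0 : Fin (n+3)) = 1 := hT.2.2.1 this
        have := congrArg Fin.val h01
        rw [hval0, hval1] at this; omega
      · have h1 := R.lab_winnerE t
        rw [← hh, lab_a t.1 (le_of_lt t.2)] at h1
        have : (0 : Fin (n+3)) = R.winner t := Option.some_injective _ h1
        have h3 := hwin3 t
        rw [← this, hval0] at h3; omega
      · have h1 := R.newE_unlabeled t
        rw [← hh, lab_a t.1 (le_of_lt t.2)] at h1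
        exact (nomatch h1)

end Participants

section Counting

variable {R : Run n T}

lemma small_card (hT : T.IsTrivalent) (hAB : T.ABAdj)
    (hwl : ∀ t : Fin n, ∃ m : Fin n, R.winner t = lbl m) (s : ℕ) :
    (Finset.univ.filter fun t : Fin n => (R.winner t : ℕ) ≤ s + 2).card ≤ s := by
  classical
  set S := Finset.univ.filter fun t : Fin n => (R.winner t : ℕ) ≤ s + 2 with hS
  have hkinj : Function.Injective (killL R) := kill_injective hT
  have hloser := loser_ge2 hT hAB hwl
  have hwin3 := winner_ge3 hwl
  have hkill_range : ∀ t ∈ S, 2 ≤ (killL R t : ℕ) ∧ (killL R t : ℕ) ≤ s + 2 := by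
    intro t ht
    have hw : (R.winner t : ℕ) ≤ s + 2 := (Finset.mem_filter.mp ht).2
    have hlw : (R.loser t : ℕ) < (R.winner t : ℕ) := R.lt_lw t
    have hl2 := hloser t
    rcases kill_mem (R := R) t with h | h <;> rw [h] <;> constructor <;> omega
  set I : Finset (Fin (n+3)) :=
    Finset.univ.filter fun x : Fin (n+3) => 2 ≤ (x : ℕ) ∧ (x : ℕ) ≤ s + 2 with hI
  have himg : S.image (killL R) ⊆ I := by
    intro x hx
    obtain ⟨t, ht, rfl⟩ := Finset.mem_image.mp hx
    exact Finset.mem_filter.mpr ⟨Finset.mem_univ _, hkill_range t ht⟩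
  have hIcard : I.card ≤ s + 1 := by
    have := Finset.card_le_card_of_injOn (f := fun x : Fin (n+3) => (x : ℕ))
      (t := Finset.Icc 2 (s+2))
      (fun x (hx : x ∈ I) => by
        have := (Finset.mem_filter.mp hx).2
        exact Finset.mem_Icc.mpr this)
      (fun x _ y _ h => Fin.ext h)
    rw [Nat.card_Icc] at this
    omega
  have hScard : S.card = (S.image (killL R)).card :=
    (Finset.card_image_of_injective S hkinj).symm
  have hle : S.card ≤ s + 1 := by
    calc S.card = (S.image (killL R)).card := hScard
      _ ≤ I.card := Finset.card_le_card himg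
      _ ≤ s + 1 := hIcard
  rcases Nat.lt_or_ge S.card (s+1) with h | h
  · omega
  have heq : S.card = s + 1 := by omega
  exfalso
  have himgeq : S.image (killL R) = I :=
    Finset.eq_of_subset_of_card_le himg (by omega)
  have hne : S.Nonempty := Finset.card_pos.mp (by omega)
  set tstar := S.max' hne with htstar
  have htmem : tstar ∈ S := S.max'_mem hne
  have hwstar : (R.winner tstar : ℕ) ≤ s + 2 := (Finset.mem_filter.mp htmem).2
  set o : Fin (n+3) :=
    if killL R tstar = R.loser tstar then R.winner tstar else R.loser tstar with ho
  have hlwne : R.loser tstar ≠ R.winner tstar := (R.lt_lw tstar).ne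
  have hone : killL R tstar ≠ o := by
    rcases kill_mem (R := R) tstar with h' | h'
    · rw [ho, if_pos h', h']; exact hlwne
    · rw [ho, if_neg (h' ▸ fun hq => hlwne hq.symm), h']
      exact fun hq => hlwne hq.symm
  have hoI : o ∈ I := by
    refine Finset.mem_filter.mpr ⟨Finset.mem_univ _, ?_⟩
    have := hloser tstar
    have := R.lt_lw tstar
    rw [ho]
    split_ifs <;> constructor <;> omega
  rw [← himgeq] at hoI
  obtain ⟨t', ht', hkt'⟩ := Finset.mem_image.mp hoI
  have htne : t' ≠ tstar := fun h => hone (h ▸ hkt')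
  have htlt : t'.1 < tstar.1 := by
    have := S.le_max' t' ht'
    rw [← htstar] at this
    exact lt_of_le_of_ne this fun h => htne (Fin.ext h)
  have hkn := kill_not_later (R := R) hT htlt
  rw [hkt'] at hkn
  rw [ho] at hkn
  split_ifs at hkn
  · exact hkn.2 rfl
  · exact hkn.1 rfl

end Counting

end Tour13
/-- If `Tour(k₁,…,kₙ)` is nonempty then `k` is a reverse Catalan sequence:
`k_n + k_{n-1} + ⋯ + k_{n-i+1} ≥ i` for every `1 ≤ i ≤ n`. -/
theorem tour_reverse_catalan (n : ℕ) (k : Fin n → ℕ) (hk : ∑ m, k m = n)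
    (h : ∃ T : PreTree (n+3) (2*n+4), InTour k T) :
    ∀ i : ℕ, 1 ≤ i → i ≤ n →
      i ≤ ∑ m ∈ Finset.univ.filter (fun m : Fin n => n - i ≤ (m:ℕ)), k m := by
  classical
  obtain ⟨T, hT, hAB, R, hwins⟩ := h
  intro i hi1 hin
  have hwl := Tour13.winner_lbl hk hwins
  set s := n - i with hs
  have hsmall := Tour13.small_card hT hAB hwl s
  set A := Finset.univ.filter (fun m : Fin n => n - i ≤ (m:ℕ)) with hA
  have hdisj : ∀ m ∈ A, ∀ m' ∈ A, m ≠ m' →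
      Disjoint (Finset.univ.filter fun t : Fin n => R.winner t = lbl m)
        (Finset.univ.filter fun t : Fin n => R.winner t = lbl m') := by
    intro m _ m' _ hne
    rw [Finset.disjoint_filter]
    intro t _ h1 h2
    exact hne (Tour13.lbl_injective (h1.symm.trans h2))
  have hsum : ∑ m ∈ A, k m
      = (A.biUnion fun m : Fin n => Finset.univ.filter
          fun t : Fin n => R.winner t = lbl m).card := by
    rw [Finset.card_biUnion hdisj]
    refine Finset.sum_congr rfl fun m _ => ?_
    rw [← hwins m]; rfl
  have hsub : (Finset.univ.filter fun t : Fin n => s + 3 ≤ (R.winner t : ℕ))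
      ⊆ A.biUnion fun m : Fin n => Finset.univ.filter
          fun t : Fin n => R.winner t = lbl m := by
    intro t ht
    have hwt : s + 3 ≤ (R.winner t : ℕ) := (Finset.mem_filter.mp ht).2
    obtain ⟨m, hm⟩ := hwl t
    have hmval : (R.winner t : ℕ) = (m : ℕ) + 3 := by rw [hm]; rfl
    refine Finset.mem_biUnion.mpr ⟨m, ?_, ?_⟩
    · refine Finset.mem_filter.mpr ⟨Finset.mem_univ _, ?_⟩
      omega
    · exact Finset.mem_filter.mpr ⟨Finset.mem_univ _, hm⟩
  have hpartition :
      (Finset.univ.filter fun t : Fin n => s + 3 ≤ (R.winner t : ℕ)).card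
      + (Finset.univ.filter fun t : Fin n => (R.winner t : ℕ) ≤ s + 2).card
      = n := by
    have hmain := Finset.card_filter_add_card_filter_not
      (s := (Finset.univ : Finset (Fin n)))
      (p := fun t : Fin n => s + 3 ≤ (R.winner t : ℕ))
    rw [Finset.card_univ, Fintype.card_fin] at hmain
    have hfeq : Finset.univ.filter (fun t : Fin n => ¬ (s + 3 ≤ (R.winner t : ℕ)))
        = Finset.univ.filter (fun t : Fin n => (R.winner t : ℕ) ≤ s + 2) :=
      Finset.filter_congr (fun x _ => by constructor <;> intro <;> omega)
    rw [hfeq] at hmain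
    exact hmain
  have hcard1 : n - s ≤
      (Finset.univ.filter fun t : Fin n => s + 3 ≤ (R.winner t : ℕ)).card := by
    omega
  calc i = n - s := by omega
    _ ≤ (Finset.univ.filter fun t : Fin n => s + 3 ≤ (R.winner t : ℕ)).card := hcard1
    _ ≤ (A.biUnion fun m : Fin n => Finset.univ.filter
          fun t : Fin n => R.winner t = lbl m).card := Finset.card_le_card hsub
    _ = ∑ m ∈ A, k m := hsum.symm
end
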